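/- Assume: (i) the rescaled kernel K_H is Lipschitz continuous on Ω with constant L and satisfies 0 < a ≤ K_H(x − u) ≤ A for all x, u ∈ Ω; (ii) the initial densities satisfy max_{1≤j≤m} ∫_Ω |log f_j⁰(u)| du = B < ∞; (iii) the initial weights satisfy λ_j⁰ ≥ λ > 0 for all j. Let (f^t, λ^t), t = 0, 1, 2, …, be the sequence generated by the algorithm, i.e., λ_j^{t+1} = ∫_Ω g(x) w_j^t(x) dx with w_j^t(x) = λ_j^t (N f_j^t)(x) / (M_{λ^t} N f^t)(x), and f_j^{t+1}(x) = α_j^{t+1} ∫_Ω K_H(x − u) g(u) (N f_j^t)(u) / (M_{λ^{t+1}} N f^t)(u) du with α_j^{t+1} the normalizing constant. Then for each j = 1,…,m the sequence of functions {f_j^t}_{t≥0} has a subsequence converging uniformly on Ω. -/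

import Mathlib

open MeasureTheory Filter

noncomputable section

/-- `Euc d` is the Euclidean space `ℝ^d`. -/
abbrev Euc (d : ℕ) : Type := EuclideanSpace ℝ (Fin d)

variable {d m : ℕ}

/-- The nonlinear smoothing operator `(N f)(x) = exp (∫_Ω K_H(x - u) log f(u) du)`. -/
noncomputable def NOp (Ω : Set (Euc d)) (KH : Euc d → ℝ) (f : Euc d → ℝ) (x : Euc d) : ℝ :=
  Real.exp (∫ u in Ω, KH (x - u) * Real.log (f u))

/-- The linear smoothing operator `(S f)(x) = ∫_Ω K_H(x - u) f(u) du`. -/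
noncomputable def SOp (Ω : Set (Euc d)) (KH : Euc d → ℝ) (f : Euc d → ℝ) (x : Euc d) : ℝ :=
  ∫ u in Ω, KH (x - u) * f u

/-- The smoothed mixture `(M_λ N f)(x) = ∑ j, λ_j (N f_j)(x)`. -/
noncomputable def MOp (Ω : Set (Euc d)) (KH : Euc d → ℝ) (lam : Fin m → ℝ)
    (f : Fin m → Euc d → ℝ) (x : Euc d) : ℝ :=
  ∑ j, lam j * NOp Ω KH (f j) x

/-- The smoothed negative log-likelihood functional
`l(f, λ) = ∫_Ω g(x) log (g(x) / (M_λ N f)(x)) dx`. -/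
noncomputable def ell (Ω : Set (Euc d)) (KH g : Euc d → ℝ) (lam : Fin m → ℝ)
    (f : Fin m → Euc d → ℝ) : ℝ :=
  ∫ x in Ω, g x * Real.log (g x / MOp Ω KH lam f x)

/-- The weight functions `w_j(x) = λ_j (N f_j)(x) / (M_λ N f)(x)`. -/
noncomputable def wFun (Ω : Set (Euc d)) (KH : Euc d → ℝ) (lam : Fin m → ℝ)
    (f : Fin m → Euc d → ℝ) (j : Fin m) (x : Euc d) : ℝ :=
  lam j * NOp Ω KH (f j) x / MOp Ω KH lam f x

/-- The iteration operator
`(G f_j)(x) = α_j ∫_Ω K_H(x - u) g(u) (N f_j)(u) / (M_λ N f)(u) du`. -/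
noncomputable def GOp (Ω : Set (Euc d)) (KH g : Euc d → ℝ) (lam : Fin m → ℝ)
    (f : Fin m → Euc d → ℝ) (α : Fin m → ℝ) (j : Fin m) (x : Euc d) : ℝ :=
  α j * ∫ u in Ω, KH (x - u) * g u * NOp Ω KH (f j) u / MOp Ω KH lam f u

/-- Kullback–Leibler distance between nonnegative functions on `Ω`:
`D(a | b) = ∫_Ω (a log (a / b) + b - a)`. -/
noncomputable def Dkl (Ω : Set (Euc d)) (a b : Euc d → ℝ) : ℝ :=
  ∫ x in Ω, (a x * Real.log (a x / b x) + b x - a x)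

/-- Multiplying an integrable function by a translated continuous kernel keeps integrability. -/
lemma kmul_integrableOn {Ω : Set (Euc d)} (hΩc : IsCompact Ω) (hΩm : MeasurableSet Ω)
    {KH : Euc d → ℝ} (hKcont : Continuous KH) {q : Euc d → ℝ}
    (hq : IntegrableOn q Ω) (hqm : Measurable q) (x : Euc d) :
    IntegrableOn (fun v => KH (x - v) * q v) Ω := by
  obtain ⟨Cx, hCx⟩ := hΩc.exists_bound_of_continuousOn
    ((hKcont.comp (continuous_const.sub continuous_id)).continuousOn (s := Ω))
  refine Integrable.mono' ((hq.norm).const_mul Cx)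
    (((hKcont.measurable.comp (measurable_const.sub measurable_id)).mul hqm).aestronglyMeasurable)
    ?_
  refine (ae_restrict_iff' hΩm).2 (Filter.Eventually.of_forall fun v hv => ?_)
  have := hCx v hv
  calc ‖KH (x - v) * q v‖ = ‖KH (x - v)‖ * ‖q v‖ := norm_mul _ _
    _ ≤ Cx * ‖q v‖ := mul_le_mul_of_nonneg_right this (norm_nonneg _)

/-- Lipschitz estimate for kernel-smoothed integrals. -/
lemma smoothed_lip {Ω : Set (Euc d)} (hΩm : MeasurableSet Ω)
    {KH : Euc d → ℝ} {L : ℝ} (hLip : ∀ x y : Euc d, |KH x - KH y| ≤ L * ‖x - y‖)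
    {p : Euc d → ℝ} (hp : IntegrableOn p Ω)
    (hint : ∀ x : Euc d, IntegrableOn (fun u => KH (x - u) * p u) Ω) (x y : Euc d) :
    |(∫ u in Ω, KH (x - u) * p u) - ∫ u in Ω, KH (y - u) * p u|
      ≤ L * ‖x - y‖ * ∫ u in Ω, |p u| := by
  rw [← integral_sub (hint x) (hint y)]
  have h1 : |∫ u in Ω, (KH (x - u) * p u - KH (y - u) * p u)|
      ≤ ∫ u in Ω, |KH (x - u) * p u - KH (y - u) * p u| := by
    simpa [Real.norm_eq_abs] using
      norm_integral_le_integral_norm (μ := volume.restrict Ω)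
        (fun u => KH (x - u) * p u - KH (y - u) * p u)
  refine h1.trans ?_
  have h2 : ∫ u in Ω, |KH (x - u) * p u - KH (y - u) * p u|
      ≤ ∫ u in Ω, (L * ‖x - y‖) * |p u| := by
    refine setIntegral_mono_on ((hint x).sub (hint y)).abs ((hp.abs).const_mul _) hΩm ?_
    intro u _
    have h3 : |KH (x - u) - KH (y - u)| ≤ L * ‖x - y‖ := by
      have := hLip (x - u) (y - u)
      rwa [sub_sub_sub_cancel_right] at this
    calc |KH (x - u) * p u - KH (y - u) * p u| = |KH (x - u) - KH (y - u)| * |p u| := by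
          rw [← sub_mul, abs_mul]
      _ ≤ (L * ‖x - y‖) * |p u| := mul_le_mul_of_nonneg_right h3 (abs_nonneg _)
  refine h2.trans ?_
  rw [integral_const_mul]

/-- Kernel-smoothed integrals of integrable functions are continuous. -/
lemma smoothed_continuous {Ω : Set (Euc d)} (hΩc : IsCompact Ω) (hΩm : MeasurableSet Ω)
    {KH : Euc d → ℝ} (hKcont : Continuous KH) {L : ℝ} (hLnn : 0 ≤ L)
    (hLip : ∀ x y : Euc d, |KH x - KH y| ≤ L * ‖x - y‖)
    {q : Euc d → ℝ} (hq : IntegrableOn q Ω) (hqm : Measurable q) :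
    Continuous (fun x => ∫ u in Ω, KH (x - u) * q u) := by
  have hint : ∀ x : Euc d, IntegrableOn (fun u => KH (x - u) * q u) Ω :=
    fun x => kmul_integrableOn hΩc hΩm hKcont hq hqm x
  have hI : 0 ≤ ∫ u in Ω, |q u| := integral_nonneg fun u => abs_nonneg _
  refine (LipschitzWith.of_dist_le_mul (K := (L * ∫ u in Ω, |q u|).toNNReal) ?_).continuous
  intro x y
  rw [Real.dist_eq, Real.coe_toNNReal _ (mul_nonneg hLnn hI), dist_eq_norm]
  calc |(∫ u in Ω, KH (x - u) * q u) - ∫ u in Ω, KH (y - u) * q u|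
      ≤ L * ‖x - y‖ * ∫ u in Ω, |q u| := smoothed_lip hΩm hLip hq hint x y
    _ = (L * ∫ u in Ω, |q u|) * ‖x - y‖ := by ring

theorem exists_uniformly_convergent_subsequence
    (Ω : Set (Euc d)) (hΩc : IsCompact Ω) (hΩm : MeasurableSet Ω)
    (KH : Euc d → ℝ) (hKmeas : Measurable KH) (hKnn : ∀ u, 0 ≤ KH u)
    (hKint : ∫ u, KH u = 1)
    (L : ℝ) (hL : 0 < L) (hLip : ∀ x y : Euc d, |KH x - KH y| ≤ L * ‖x - y‖)
    (a A : ℝ) (ha : 0 < a)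
    (hKa : ∀ x ∈ Ω, ∀ u ∈ Ω, a ≤ KH (x - u))
    (hKA : ∀ x ∈ Ω, ∀ u ∈ Ω, KH (x - u) ≤ A)
    (g : Euc d → ℝ) (hgmeas : Measurable g) (hgnn : ∀ x, 0 ≤ g x)
    (hgdens : ∫ x in Ω, g x = 1)
    (lamSeq : ℕ → Fin m → ℝ) (fSeq : ℕ → Fin m → Euc d → ℝ) (αSeq : ℕ → Fin m → ℝ)
    (B : ℝ) (hB : ∀ j, ∫ u in Ω, |Real.log (fSeq 0 j u)| ≤ B)
    (lamBar : ℝ) (hlamBar : 0 < lamBar) (hlamInit : ∀ j, lamBar ≤ lamSeq 0 j)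
    (hlamSum0 : ∑ j, lamSeq 0 j = 1)
    (hfmeas : ∀ t j, Measurable (fSeq t j))
    (hfpos0 : ∀ j x, 0 < fSeq 0 j x)
    (hfdens : ∀ t j, ∫ x in Ω, fSeq t j x = 1)
    (hflog : ∀ t j, IntegrableOn (fun u => Real.log (fSeq t j u)) Ω)
    (hαpos : ∀ t j, 0 < αSeq t j)
    (hlamrec : ∀ t j, lamSeq (t + 1) j = ∫ x in Ω, g x * wFun Ω KH (lamSeq t) (fSeq t) j x)
    (hfrec : ∀ t j x, fSeq (t + 1) j x =
      αSeq (t + 1) j * ∫ u in Ω, KH (x - u) * g u * NOp Ω KH (fSeq t j) u /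
        MOp Ω KH (lamSeq (t + 1)) (fSeq t) u)
    (hwint : ∀ t j, IntegrableOn (fun x => g x * wFun Ω KH (lamSeq t) (fSeq t) j x) Ω)
    (hGint : ∀ t j x, IntegrableOn (fun u => KH (x - u) * g u * NOp Ω KH (fSeq t j) u /
      MOp Ω KH (lamSeq (t + 1)) (fSeq t) u) Ω) :
    ∀ j, ∃ (ψ : Euc d → ℝ) (φ : ℕ → ℕ), StrictMono φ ∧
      TendstoUniformlyOn (fun l => fSeq (φ l) j) ψ atTop Ω := by
  classical
  intro j
  -- basic measure-theoretic facts about Ω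
  have hμfin : volume Ω ≠ ⊤ := hΩc.measure_lt_top.ne
  have hμ0 : volume Ω ≠ 0 := by
    intro h0
    have h1 := hfdens 0 j
    rw [Measure.restrict_eq_zero.mpr h0, integral_zero_measure] at h1
    norm_num at h1
  obtain ⟨x0, hx0⟩ : Ω.Nonempty := nonempty_of_measure_ne_zero hμ0
  set μr : ℝ := (volume Ω).toReal with hμr_def
  have hμr : 0 < μr := ENNReal.toReal_pos hμ0 hμfin
  have haA : a ≤ A := le_trans (hKa x0 hx0 x0 hx0) (hKA x0 hx0 x0 hx0)
  have hA : 0 < A := lt_of_lt_of_le ha haA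
  have hKcont : Continuous KH := by
    refine (LipschitzWith.of_dist_le_mul (K := L.toNNReal) ?_).continuous
    intro x y
    rw [Real.dist_eq, Real.coe_toNNReal _ hL.le, dist_eq_norm]
    exact hLip x y
  -- nonnegativity of the weights
  have hlam_nn : ∀ t j', 0 ≤ lamSeq t j' := by
    intro t
    induction t with
    | zero => exact fun j' => le_trans hlamBar.le (hlamInit j')
    | succ t ih =>
      intro j'
      rw [hlamrec]
      refine setIntegral_nonneg hΩm fun x _ => mul_nonneg (hgnn x) ?_
      unfold wFun
      refine div_nonneg (mul_nonneg (ih j') (Real.exp_pos _).le) ?_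
      exact Finset.sum_nonneg fun i _ => mul_nonneg (ih i) (Real.exp_pos _).le
  have hM_nn : ∀ s t x, 0 ≤ MOp Ω KH (lamSeq s) (fSeq t) x := fun s t x =>
    Finset.sum_nonneg fun i _ => mul_nonneg (hlam_nn s i) (Real.exp_pos _).le
  set C : ℝ := 1 / (a * μr) with hC_def
  have hC : 0 < C := by positivity
  -- key uniform bounds on the iterates
  have key : ∀ t, (∀ x ∈ Ω, fSeq (t + 1) j x ∈ Set.Icc 0 (A * C)) ∧
      (∀ x y : Euc d, dist (fSeq (t + 1) j x) (fSeq (t + 1) j y) ≤ (L * C) * dist x y) := by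
    intro t
    set Nf : Euc d → ℝ := NOp Ω KH (fSeq t j) with hNf_def
    set Mf : Euc d → ℝ := MOp Ω KH (lamSeq (t + 1)) (fSeq t) with hMf_def
    set h : Euc d → ℝ := fun u => g u * Nf u / Mf u with hh_def
    have hh_nn : ∀ u, 0 ≤ h u := fun u =>
      div_nonneg (mul_nonneg (hgnn u) (Real.exp_pos _).le) (hM_nn _ _ u)
    have hrw : ∀ x : Euc d, (fun u => KH (x - u) * g u * Nf u / Mf u)
        = fun u => KH (x - u) * h u := by
      intro x; funext u; rw [hh_def]; rw [mul_assoc, mul_div_assoc]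
    have hGint' : ∀ x : Euc d, IntegrableOn (fun u => KH (x - u) * h u) Ω := by
      intro x; have := hGint t j x; rwa [hrw x] at this
    -- continuity / measurability of h
    have hNcont : ∀ i, Continuous (NOp Ω KH (fSeq t i)) := by
      intro i
      exact Real.continuous_exp.comp
        (smoothed_continuous hΩc hΩm hKcont hL.le hLip (hflog t i)
          (Real.measurable_log.comp (hfmeas t i)))
    have hMcont : Continuous Mf := by
      rw [hMf_def]; unfold MOp
      exact continuous_finset_sum _ fun i _ => continuous_const.mul (hNcont i)
    have hhm : Measurable h :=
      (hgmeas.mul (hNcont j).measurable).div hMcont.measurable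
    have hh_int : IntegrableOn h Ω := by
      refine Integrable.mono' ((hGint' x0).const_mul (1 / a)) hhm.aestronglyMeasurable ?_
      refine (ae_restrict_iff' hΩm).2 (Filter.Eventually.of_forall fun u hu => ?_)
      rw [Real.norm_eq_abs, abs_of_nonneg (hh_nn u)]
      have h1 : a * h u ≤ KH (x0 - u) * h u :=
        mul_le_mul_of_nonneg_right (hKa x0 hx0 u hu) (hh_nn u)
      calc h u = (1 / a) * (a * h u) := by field_simp
        _ ≤ (1 / a) * (KH (x0 - u) * h u) :=
          mul_le_mul_of_nonneg_left h1 (by positivity)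
    set I : ℝ := ∫ u in Ω, h u with hI_def
    have hI_nn : 0 ≤ I := setIntegral_nonneg hΩm fun u _ => hh_nn u
    have habs : ∫ u in Ω, |h u| = I := by
      rw [hI_def]
      exact integral_congr_ae (Filter.Eventually.of_forall fun u => abs_of_nonneg (hh_nn u))
    have hf_eq : ∀ x, fSeq (t + 1) j x = αSeq (t + 1) j * ∫ u in Ω, KH (x - u) * h u := by
      intro x; rw [hfrec t j x, hrw x]
    have hα := hαpos (t + 1) j
    have hup : ∀ x ∈ Ω, (∫ u in Ω, KH (x - u) * h u) ≤ A * I := by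
      intro x hx
      calc (∫ u in Ω, KH (x - u) * h u) ≤ ∫ u in Ω, A * h u :=
            setIntegral_mono_on (hGint' x) (hh_int.const_mul A) hΩm fun u hu =>
              mul_le_mul_of_nonneg_right (hKA x hx u hu) (hh_nn u)
        _ = A * I := by rw [integral_const_mul]
    have hlow : ∀ x ∈ Ω, a * I ≤ ∫ u in Ω, KH (x - u) * h u := by
      intro x hx
      calc a * I = ∫ u in Ω, a * h u := by rw [integral_const_mul]
        _ ≤ ∫ u in Ω, KH (x - u) * h u :=
            setIntegral_mono_on (hh_int.const_mul a) (hGint' x) hΩm fun u hu =>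
              mul_le_mul_of_nonneg_right (hKa x hx u hu) (hh_nn u)
    have hfint : IntegrableOn (fSeq (t + 1) j) Ω := by
      by_contra hc
      have h1 := hfdens (t + 1) j
      rw [integral_undef hc] at h1
      norm_num at h1
    have h1 : (αSeq (t + 1) j * (a * I)) * μr ≤ 1 := by
      have hpt : ∀ x ∈ Ω, αSeq (t + 1) j * (a * I) ≤ fSeq (t + 1) j x := by
        intro x hx
        rw [hf_eq x]
        exact mul_le_mul_of_nonneg_left (hlow x hx) hα.le
      calc (αSeq (t + 1) j * (a * I)) * μr = ∫ _x in Ω, αSeq (t + 1) j * (a * I) := by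
            rw [setIntegral_const, smul_eq_mul, mul_comm]; rfl
        _ ≤ ∫ x in Ω, fSeq (t + 1) j x :=
            setIntegral_mono_on (integrableOn_const hΩc.measure_lt_top.ne) hfint hΩm hpt
        _ = 1 := hfdens (t + 1) j
    have hαI : αSeq (t + 1) j * I ≤ C := by
      rw [hC_def, le_div_iff₀ (by positivity)]
      nlinarith
    have hαI_nn : 0 ≤ αSeq (t + 1) j * I := mul_nonneg hα.le hI_nn
    constructor
    · intro x hx
      constructor
      · rw [hf_eq x]
        exact mul_nonneg hα.le (le_trans (by positivity) (hlow x hx))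
      · rw [hf_eq x]
        calc αSeq (t + 1) j * ∫ u in Ω, KH (x - u) * h u ≤ αSeq (t + 1) j * (A * I) :=
              mul_le_mul_of_nonneg_left (hup x hx) hα.le
          _ = A * (αSeq (t + 1) j * I) := by ring
          _ ≤ A * C := mul_le_mul_of_nonneg_left hαI hA.le
    · intro x y
      rw [Real.dist_eq, hf_eq x, hf_eq y, ← mul_sub, abs_mul, abs_of_pos hα]
      have hlip2 := smoothed_lip hΩm hLip hh_int hGint' x y
      rw [habs] at hlip2
      calc αSeq (t + 1) j * |(∫ u in Ω, KH (x - u) * h u) - ∫ u in Ω, KH (y - u) * h u|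
          ≤ αSeq (t + 1) j * (L * ‖x - y‖ * I) := mul_le_mul_of_nonneg_left hlip2 hα.le
        _ = (L * (αSeq (t + 1) j * I)) * ‖x - y‖ := by ring
        _ ≤ (L * C) * ‖x - y‖ :=
            mul_le_mul_of_nonneg_right (mul_le_mul_of_nonneg_left hαI hL.le) (norm_nonneg _)
        _ = (L * C) * dist x y := by rw [dist_eq_norm]
  -- Arzelà–Ascoli on the compact set Ω
  haveI : CompactSpace ↥Ω := isCompact_iff_compactSpace.mp hΩc
  have hLC : 0 ≤ L * C := by positivity
  have hlipF : ∀ t, LipschitzWith (L * C).toNNReal (fun x : ↥Ω => fSeq (t + 1) j x) := by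
    intro t
    refine LipschitzWith.of_dist_le_mul ?_
    intro x y
    rw [Real.coe_toNNReal _ hLC, Subtype.dist_eq]
    exact (key t).2 x y
  set F : ℕ → (BoundedContinuousFunction ↥Ω ℝ) := fun t =>
    BoundedContinuousFunction.mkOfCompact ⟨fun x : ↥Ω => fSeq (t + 1) j x,
      (hlipF t).continuous⟩ with hF_def
  have hFapp : ∀ t (x : ↥Ω), F t x = fSeq (t + 1) j x := fun t x => rfl
  have in_s : ∀ (f : BoundedContinuousFunction ↥Ω ℝ) (x : ↥Ω), f ∈ Set.range F → f x ∈ Set.Icc 0 (A * C) := by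
    rintro f x ⟨t, rfl⟩
    exact (key t).1 x x.2
  have equi : Equicontinuous ((↑) : Set.range F → ↥Ω → ℝ) := by
    refine Metric.equicontinuous_of_continuity_modulus (fun r => (L * C) * r) ?_ _ ?_
    · have : Continuous fun r : ℝ => (L * C) * r := continuous_const.mul continuous_id
      simpa using this.tendsto 0
    · rintro x y ⟨f, t, rfl⟩
      exact (key t).2 x y
  have hcomp : IsCompact (closure (Set.range F)) :=
    BoundedContinuousFunction.arzela_ascoli (Set.Icc 0 (A * C)) isCompact_Icc _ in_s equi
  obtain ⟨ψ0, _, φ, hφ, hconv⟩ :=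
    hcomp.isSeqCompact (x := F) fun n => subset_closure (Set.mem_range_self n)
  have huconv : TendstoUniformly (fun l (x : ↥Ω) => F (φ l) x) (⇑ψ0) atTop :=
    BoundedContinuousFunction.tendsto_iff_tendstoUniformly.mp hconv
  refine ⟨fun x => if hx : x ∈ Ω then ψ0 ⟨x, hx⟩ else 0, fun l => φ l + 1,
    fun s t hst => by simpa using hφ hst, ?_⟩
  rw [tendstoUniformlyOn_iff_tendstoUniformly_comp_coe]
  have h2 : ((fun x => if hx : x ∈ Ω then ψ0 ⟨x, hx⟩ else 0) ∘ ((↑) : ↥Ω → Euc d)) = ⇑ψ0 := by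
    funext x
    simp [Function.comp, x.2]
  rw [h2]
  exact huconv
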